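/- Let X be a Hilbert space, f, g : X → ℝ ∪ {+∞} Φ_lsc-convex, α ∈ ℝ, and x̄ ∈ dom f ∩ dom g with f(x̄) ≥ α and g(x̄) ≥ α. If 0 ∈ co(∂_lsc f(x̄) ∪ ∂_lsc g(x̄)) (the zero subgradient condition), then there exist φ₁ ∈ supp(f) and φ₂ ∈ supp(g) (Φ_lsc minorants of f, g respectively) such that {x : φ₁(x) < α} ∩ {x : φ₂(x) < α} = ∅. -/

import Mathlib

open RealInnerProductSpace

lemma conv_aux {X : Type*} [NormedAddCommGroup X] [InnerProductSpace ℝ X]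
    (h : X → EReal) (x₀ : X) (r : ℝ) (hr : h x₀ = (r : EReal)) :
    Convex ℝ {p : ℝ × X | 0 ≤ p.1 ∧ ∀ x,
      h x₀ + ((⟪p.2, x - x₀⟫ - p.1 * ‖x‖ ^ 2 + p.1 * ‖x₀‖ ^ 2 : ℝ) : EReal) ≤ h x} := by
  intro p hp q hq u v hu hv huv
  constructor
  · have : (u • p + v • q).1 = u * p.1 + v * q.1 := rfl
    rw [this]
    have := mul_nonneg hu hp.1
    have := mul_nonneg hv hq.1
    linarith
  · intro x
    have hp2 := hp.2 x
    have hq2 := hq.2 x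
    rw [hr, ← EReal.coe_add] at hp2 hq2 ⊢
    have h1 : (u • p + v • q).1 = u * p.1 + v * q.1 := rfl
    have h2 : (u • p + v • q).2 = u • p.2 + v • q.2 := rfl
    have key : ⟪(u • p + v • q).2, x - x₀⟫ - (u • p + v • q).1 * ‖x‖ ^ 2
        + (u • p + v • q).1 * ‖x₀‖ ^ 2
        = u * (⟪p.2, x - x₀⟫ - p.1 * ‖x‖ ^ 2 + p.1 * ‖x₀‖ ^ 2)
        + v * (⟪q.2, x - x₀⟫ - q.1 * ‖x‖ ^ 2 + q.1 * ‖x₀‖ ^ 2) := by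
      rw [h1, h2, inner_add_left, real_inner_smul_left, real_inner_smul_left]
      ring
    rw [key]
    rcases le_total (⟪p.2, x - x₀⟫ - p.1 * ‖x‖ ^ 2 + p.1 * ‖x₀‖ ^ 2)
      (⟪q.2, x - x₀⟫ - q.1 * ‖x‖ ^ 2 + q.1 * ‖x₀‖ ^ 2) with hle | hle
    · refine le_trans (EReal.coe_le_coe_iff.mpr ?_) hq2
      have e1 := mul_le_mul_of_nonneg_left hle hu
      have e2 : (u + v) * (⟪q.2, x - x₀⟫ - q.1 * ‖x‖ ^ 2 + q.1 * ‖x₀‖ ^ 2)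
          = ⟪q.2, x - x₀⟫ - q.1 * ‖x‖ ^ 2 + q.1 * ‖x₀‖ ^ 2 := by rw [huv, one_mul]
      nlinarith [e1, e2]
    · refine le_trans (EReal.coe_le_coe_iff.mpr ?_) hp2
      have e1 := mul_le_mul_of_nonneg_left hle hv
      have e2 : (u + v) * (⟪p.2, x - x₀⟫ - p.1 * ‖x‖ ^ 2 + p.1 * ‖x₀‖ ^ 2)
          = ⟪p.2, x - x₀⟫ - p.1 * ‖x‖ ^ 2 + p.1 * ‖x₀‖ ^ 2 := by rw [huv, one_mul]
      nlinarith [e1, e2]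

/-- If Φ_lsc-convex f, g satisfy the zero subgradient condition at
x₀ ∈ dom f ∩ dom g with f(x₀) ≥ α and g(x₀) ≥ α, then there exist minorants
φ₁ ∈ supp f, φ₂ ∈ supp g with the intersection property at level α. -/
theorem stmt_12 {X : Type*} [NormedAddCommGroup X] [InnerProductSpace ℝ X]
    [CompleteSpace X]
    (Φlsc : Set (X → ℝ))
    (hΦ : Φlsc = {φ | ∃ a ℓ c, 0 ≤ a ∧ ∀ x, φ x = -a * ‖x‖ ^ 2 + ⟪ℓ, x⟫ + c})
    (f g : X → EReal)
    (hfconv : ∀ x, f x = ⨆ φ ∈ {φ ∈ Φlsc | ∀ y, (φ y : EReal) ≤ f y}, (φ x : EReal))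
    (hgconv : ∀ x, g x = ⨆ φ ∈ {φ ∈ Φlsc | ∀ y, (φ y : EReal) ≤ g y}, (φ x : EReal))
    (α : ℝ) (x₀ : X) (hfx₀ : f x₀ ≠ ⊤) (hgx₀ : g x₀ ≠ ⊤)
    (hfα : (α : EReal) ≤ f x₀) (hgα : (α : EReal) ≤ g x₀)
    (hzero : (0, 0) ∈ convexHull ℝ
      ({p : ℝ × X | 0 ≤ p.1 ∧ ∀ x,
          f x₀ + ((⟪p.2, x - x₀⟫ - p.1 * ‖x‖ ^ 2 + p.1 * ‖x₀‖ ^ 2 : ℝ) : EReal) ≤ f x} ∪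
       {p : ℝ × X | 0 ≤ p.1 ∧ ∀ x,
          g x₀ + ((⟪p.2, x - x₀⟫ - p.1 * ‖x‖ ^ 2 + p.1 * ‖x₀‖ ^ 2 : ℝ) : EReal) ≤ g x})) :
    ∃ φ₁ ∈ Φlsc, ∃ φ₂ ∈ Φlsc,
      (∀ y, (φ₁ y : EReal) ≤ f y) ∧ (∀ y, (φ₂ y : EReal) ≤ g y) ∧
      {x | φ₁ x < α} ∩ {x | φ₂ x < α} = ∅ := by
  -- finiteness of f x₀, g x₀
  have hfbot : f x₀ ≠ ⊥ := fun h => by rw [h] at hfα; exact (EReal.coe_ne_bot α) (le_bot_iff.mp hfα)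
  have hgbot : g x₀ ≠ ⊥ := fun h => by rw [h] at hgα; exact (EReal.coe_ne_bot α) (le_bot_iff.mp hgα)
  have hfr : f x₀ = ((f x₀).toReal : EReal) := (EReal.coe_toReal hfx₀ hfbot).symm
  have hgr : g x₀ = ((g x₀).toReal : EReal) := (EReal.coe_toReal hgx₀ hgbot).symm
  set A := {p : ℝ × X | 0 ≤ p.1 ∧ ∀ x,
      f x₀ + ((⟪p.2, x - x₀⟫ - p.1 * ‖x‖ ^ 2 + p.1 * ‖x₀‖ ^ 2 : ℝ) : EReal) ≤ f x} with hAdef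
  set B := {p : ℝ × X | 0 ≤ p.1 ∧ ∀ x,
      g x₀ + ((⟪p.2, x - x₀⟫ - p.1 * ‖x‖ ^ 2 + p.1 * ‖x₀‖ ^ 2 : ℝ) : EReal) ≤ g x} with hBdef
  have hA : Convex ℝ A := conv_aux f x₀ _ hfr
  have hB : Convex ℝ B := conv_aux g x₀ _ hgr
  -- supp f and supp g are nonempty
  have hsuppf : ∃ φ ∈ Φlsc, ∀ y, (φ y : EReal) ≤ f y := by
    by_contra hc
    push_neg at hc
    have hempty : {φ ∈ Φlsc | ∀ y, (φ y : EReal) ≤ f y} = ∅ := by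
      ext φ; simp only [Set.mem_setOf_eq, Set.mem_empty_iff_false, iff_false, not_and]
      intro h1 h2
      obtain ⟨y, hy⟩ := hc φ h1
      exact absurd (h2 y) (not_le.mpr hy)
    have := hfconv x₀
    rw [hempty] at this
    simp at this
    exact hfbot this
  have hsuppg : ∃ φ ∈ Φlsc, ∀ y, (φ y : EReal) ≤ g y := by
    by_contra hc
    push_neg at hc
    have hempty : {φ ∈ Φlsc | ∀ y, (φ y : EReal) ≤ g y} = ∅ := by
      ext φ; simp only [Set.mem_setOf_eq, Set.mem_empty_iff_false, iff_false, not_and]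
      intro h1 h2
      obtain ⟨y, hy⟩ := hc φ h1
      exact absurd (h2 y) (not_le.mpr hy)
    have := hgconv x₀
    rw [hempty] at this
    simp at this
    exact hgbot this
  -- minorant construction from an element of A (resp. B)
  have minor : ∀ (h : X → EReal), (α : EReal) ≤ h x₀ → ∀ p : ℝ × X,
      (∀ x, h x₀ + ((⟪p.2, x - x₀⟫ - p.1 * ‖x‖ ^ 2 + p.1 * ‖x₀‖ ^ 2 : ℝ) : EReal) ≤ h x) →
      ∀ x, ((-p.1 * ‖x‖ ^ 2 + ⟪p.2, x⟫ + (α - ⟪p.2, x₀⟫ + p.1 * ‖x₀‖ ^ 2) : ℝ) : EReal) ≤ h x := by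
    intro h hα p hp x
    have key : (-p.1 * ‖x‖ ^ 2 + ⟪p.2, x⟫ + (α - ⟪p.2, x₀⟫ + p.1 * ‖x₀‖ ^ 2) : ℝ)
        = α + (⟪p.2, x - x₀⟫ - p.1 * ‖x‖ ^ 2 + p.1 * ‖x₀‖ ^ 2) := by
      rw [inner_sub_right]; ring
    rw [key, EReal.coe_add]
    exact le_trans (add_le_add_left hα _) (hp x)
  rcases Set.eq_empty_or_nonempty A with hAe | hAne
  · -- A empty: (0,0) ∈ B, so g ≥ α everywhere; take φ₂ ≡ α
    rw [hAe, Set.empty_union, hB.convexHull_eq] at hzero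
    have hgge : ∀ x, (α : EReal) ≤ g x := by
      intro x
      have := hzero.2 x
      simpa using le_trans hgα (by simpa using this)
    obtain ⟨φ₁, hφ₁Φ, hφ₁f⟩ := hsuppf
    refine ⟨φ₁, hφ₁Φ, fun x => -(0:ℝ) * ‖x‖ ^ 2 + ⟪(0:X), x⟫ + α, ?_, hφ₁f, ?_, ?_⟩
    · rw [hΦ]; exact ⟨0, 0, α, le_refl 0, fun x => rfl⟩
    · intro y; simpa using hgge y
    · ext x
      simp only [Set.mem_inter_iff, Set.mem_setOf_eq, Set.mem_empty_iff_false, iff_false, not_and]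
      intro _
      simp
  rcases Set.eq_empty_or_nonempty B with hBe | hBne
  · -- B empty: (0,0) ∈ A, so f ≥ α everywhere; take φ₁ ≡ α
    rw [hBe, Set.union_empty, hA.convexHull_eq] at hzero
    have hfge : ∀ x, (α : EReal) ≤ f x := by
      intro x
      have := hzero.2 x
      simpa using le_trans hfα (by simpa using this)
    obtain ⟨φ₂, hφ₂Φ, hφ₂g⟩ := hsuppg
    refine ⟨fun x => -(0:ℝ) * ‖x‖ ^ 2 + ⟪(0:X), x⟫ + α, ?_, φ₂, hφ₂Φ, ?_, hφ₂g, ?_⟩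
    · rw [hΦ]; exact ⟨0, 0, α, le_refl 0, fun x => rfl⟩
    · intro y; simpa using hfge y
    · ext x
      simp only [Set.mem_inter_iff, Set.mem_setOf_eq, Set.mem_empty_iff_false, iff_false, not_and]
      intro hx
      simp at hx
  -- main case
  rw [hA.convexHull_union hB hAne hBne, mem_convexJoin] at hzero
  obtain ⟨p, hp, q, hq, u, v, hu, hv, huv, hcomb⟩ := hzero
  have hc1 : u * p.1 + v * q.1 = 0 := congrArg Prod.fst hcomb
  have hc2 : u • p.2 + v • q.2 = 0 := congrArg Prod.snd hcomb
  refine ⟨fun x => -p.1 * ‖x‖ ^ 2 + ⟪p.2, x⟫ + (α - ⟪p.2, x₀⟫ + p.1 * ‖x₀‖ ^ 2), ?_,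
    fun x => -q.1 * ‖x‖ ^ 2 + ⟪q.2, x⟫ + (α - ⟪q.2, x₀⟫ + q.1 * ‖x₀‖ ^ 2), ?_,
    minor f hfα p hp.2, minor g hgα q hq.2, ?_⟩
  · rw [hΦ]; exact ⟨p.1, p.2, _, hp.1, fun x => rfl⟩
  · rw [hΦ]; exact ⟨q.1, q.2, _, hq.1, fun x => rfl⟩
  · ext x
    simp only [Set.mem_inter_iff, Set.mem_setOf_eq, Set.mem_empty_iff_false, iff_false, not_and]
    intro h1 h2
    set ep := ⟪p.2, x - x₀⟫ - p.1 * ‖x‖ ^ 2 + p.1 * ‖x₀‖ ^ 2 with hep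
    set eq' := ⟪q.2, x - x₀⟫ - q.1 * ‖x‖ ^ 2 + q.1 * ‖x₀‖ ^ 2 with heq
    have hep0 : ep < 0 := by
      rw [hep, inner_sub_right]; nlinarith [h1]
    have heq0 : eq' < 0 := by
      rw [heq, inner_sub_right]; nlinarith [h2]
    have hkey : u * ep + v * eq' = 0 := by
      rw [hep, heq]
      have : ⟪u • p.2 + v • q.2, x - x₀⟫ = (0:ℝ) := by rw [hc2, inner_zero_left]
      rw [inner_add_left, real_inner_smul_left, real_inner_smul_left] at this
      nlinarith [this, hc1]
    rcases hu.lt_or_eq with hu0 | hu0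
    · have h3 : u * ep < 0 := mul_neg_of_pos_of_neg hu0 hep0
      have h4 : v * eq' ≤ 0 := mul_nonpos_of_nonneg_of_nonpos hv heq0.le
      linarith
    · have hv1 : v = 1 := by linarith
      rw [← hu0, hv1] at hkey
      simp at hkey
      linarith
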